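/- Assume k is algebraically closed. Then: (a) the fixed subalgebra (kΓ)^{S^⊥} of the group algebra kΓ under the action of S^⊥ equals kS; (b) every S^⊥-stable ideal I of kΓ is generated by its contraction to kS, i.e., I = (kΓ)(I ∩ kS). -/

import Mathlib

/-- The character `α ↦ ∏ᵢ hᵢ^{αᵢ}` of `Γ = ℤⁿ` attached to `h ∈ (kˣ)ⁿ`. -/
def powChar {k : Type*} [Field k] {n : ℕ} (h : Fin n → kˣ) :
    Multiplicative (Fin n → ℤ) →* kˣ where
  toFun α := ∏ i, h i ^ (Multiplicative.toAdd α i)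
  map_one' := by simp
  map_mul' a b := by
    simp [toAdd_mul, Pi.add_apply, zpow_add, Finset.prod_mul_distrib]

/-- Auxiliary monoid homomorphism `α ↦ χ(α) yᵅ` into the Laurent polynomial ring
`kΓ = k[y₁^{±1},…,yₙ^{±1}]` (realized as the group algebra of `Γ = ℤⁿ`). -/
noncomputable def scaleMonHom {k : Type*} [Field k] {n : ℕ}
    (χ : Multiplicative (Fin n → ℤ) →* kˣ) :
    Multiplicative (Fin n → ℤ) →* AddMonoidAlgebra k (Fin n → ℤ) where
  toFun α := ((χ α : k)) • AddMonoidAlgebra.of k (Fin n → ℤ) α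
  map_one' := by
    show (↑(χ 1) : k) • (AddMonoidAlgebra.of k (Fin n → ℤ)) 1 = 1
    rw [map_one, map_one, Units.val_one, one_smul]
  map_mul' a b := by
    show (↑(χ (a * b)) : k) • (AddMonoidAlgebra.of k (Fin n → ℤ)) (a * b)
      = ((↑(χ a) : k) • (AddMonoidAlgebra.of k (Fin n → ℤ)) a) *
        ((↑(χ b) : k) • (AddMonoidAlgebra.of k (Fin n → ℤ)) b)
    rw [map_mul, map_mul, Units.val_mul, smul_mul_smul_comm]

/-- The `k`-algebra automorphism of the Laurent polynomial ring scaling the monomial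
`yᵅ` by `χ(α)`, for a character `χ : Γ → kˣ`. -/
noncomputable def lactM {k : Type*} [Field k] {n : ℕ}
    (χ : Multiplicative (Fin n → ℤ) →* kˣ) :
    AddMonoidAlgebra k (Fin n → ℤ) →ₐ[k] AddMonoidAlgebra k (Fin n → ℤ) :=
  AddMonoidAlgebra.lift k _ (Fin n → ℤ) (scaleMonHom χ)

/-- The action of `h ∈ H = (kˣ)ⁿ` on the Laurent polynomial ring, `yᵢ ↦ hᵢ yᵢ`. -/
noncomputable def lact {k : Type*} [Field k] {n : ℕ} (h : Fin n → kˣ) :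
    AddMonoidAlgebra k (Fin n → ℤ) →ₐ[k] AddMonoidAlgebra k (Fin n → ℤ) :=
  lactM (powChar h)

section Aux
variable {k : Type*} [Field k] {n : ℕ}

lemma lactM_single (χ : Multiplicative (Fin n → ℤ) →* kˣ) (α : Fin n → ℤ) (c : k) :
    lactM χ (AddMonoidAlgebra.single α c)
      = AddMonoidAlgebra.single α ((χ (Multiplicative.ofAdd α) : k) * c) := by
  unfold lactM
  rw [AddMonoidAlgebra.lift_single]
  show c • ((χ (Multiplicative.ofAdd α) : k) • AddMonoidAlgebra.of k (Fin n → ℤ) (Multiplicative.ofAdd α)) = _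
  rw [AddMonoidAlgebra.of_apply, smul_smul]
  simp [AddMonoidAlgebra.smul_single', mul_comm]

lemma lactM_coeff (χ : Multiplicative (Fin n → ℤ) →* kˣ) (f : AddMonoidAlgebra k (Fin n → ℤ))
    (a : Fin n → ℤ) : (lactM χ f).coeff a = (χ (Multiplicative.ofAdd a) : k) * f.coeff a := by
  induction f using AddMonoidAlgebra.induction_linear with
  | zero => simp
  | add f g hf hg =>
      rw [map_add, AddMonoidAlgebra.coeff_add, Finsupp.add_apply, hf, hg, AddMonoidAlgebra.coeff_add, Finsupp.add_apply, mul_add]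
  | single α c =>
      rw [lactM_single, AddMonoidAlgebra.coeff_single, AddMonoidAlgebra.coeff_single, Finsupp.single_apply, Finsupp.single_apply]
      by_cases h : α = a
      · subst h; simp
      · simp [h]

end Aux

/-- Proposition 3.8(a),(b): `k` algebraically closed, `σ` an alternating
bicharacter on `Γ = ℤⁿ` with radical `S`, `H = Hom(Γ,kˣ)` acting on the group algebra
`kΓ` by `h·yᵅ = ⟨h,α⟩yᵅ`, and `S^⊥ = {h ∈ H : h ≡ 1 on S}`.  Then
(a) `(kΓ)^{S^⊥} = kS` (the span of the `yᵅ`, `α ∈ S`), and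
(b) every `S^⊥`-stable ideal `I` of `kΓ` satisfies `I = (kΓ)(I ∩ kS)`. -/
theorem stmt_15 {k : Type*} [Field k] [IsAlgClosed k] {n : ℕ}
    (σ : (Fin n → ℤ) → (Fin n → ℤ) → kˣ)
    (halt : ∀ α, σ α α = 1)
    (hmul₁ : ∀ α β γ, σ (α + β) γ = σ α γ * σ β γ)
    (hmul₂ : ∀ α β γ, σ α (β + γ) = σ α β * σ α γ) :
    -- (a)
    ({f : AddMonoidAlgebra k (Fin n → ℤ) |
        ∀ χ : Multiplicative (Fin n → ℤ) →* kˣ,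
          (∀ α, (∀ β, σ α β = 1) → χ (Multiplicative.ofAdd α) = 1) → lactM χ f = f}
      = ↑(Submodule.span k {f : AddMonoidAlgebra k (Fin n → ℤ) |
          ∃ α, (∀ β, σ α β = 1) ∧ f = AddMonoidAlgebra.single α 1})) ∧
    -- (b)
    (∀ I : Ideal (AddMonoidAlgebra k (Fin n → ℤ)),
      (∀ χ : Multiplicative (Fin n → ℤ) →* kˣ,
        (∀ α, (∀ β, σ α β = 1) → χ (Multiplicative.ofAdd α) = 1) →
        Ideal.comap (lactM χ) I = I) →
      I = Ideal.span (↑I ∩ ↑(Submodule.span k {f : AddMonoidAlgebra k (Fin n → ℤ) |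
            ∃ α, (∀ β, σ α β = 1) ∧ f = AddMonoidAlgebra.single α 1}))) := by
  classical
  set KS : Submodule k (AddMonoidAlgebra k (Fin n → ℤ)) :=
    Submodule.span k {f : AddMonoidAlgebra k (Fin n → ℤ) |
      ∃ α, (∀ β, σ α β = 1) ∧ f = AddMonoidAlgebra.single α 1} with hKS
  -- separating characters
  have sep : ∀ α : Fin n → ℤ, ¬(∀ β, σ α β = 1) →
      ∃ χ : Multiplicative (Fin n → ℤ) →* kˣ,
        (∀ α', (∀ β, σ α' β = 1) → χ (Multiplicative.ofAdd α') = 1) ∧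
        χ (Multiplicative.ofAdd α) ≠ 1 := by
    intro α h
    push_neg at h
    obtain ⟨β, hβ⟩ := h
    have h0 : σ 0 β = 1 := by
      have h1 := hmul₁ 0 0 β
      rw [add_zero] at h1
      exact (left_eq_mul.mp h1)
    refine ⟨{ toFun := fun γ => σ (Multiplicative.toAdd γ) β,
              map_one' := h0, map_mul' := fun a b => hmul₁ _ _ _ }, ?_, ?_⟩
    · intro α' hα'; exact hα' β
    · exact hβ
  -- membership in KS from support condition
  have memKS : ∀ f : AddMonoidAlgebra k (Fin n → ℤ),
      (∀ a ∈ f.coeff.support, ∀ β, σ a β = 1) → f ∈ KS := by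
    intro f hf
    have : f = ∑ a ∈ f.coeff.support, (f.coeff a) • AddMonoidAlgebra.single a (1 : k) := by
      conv_lhs => rw [← AddMonoidAlgebra.sum_coeff_single f]
      rw [Finsupp.sum]
      refine Finset.sum_congr rfl fun a _ => ?_
      rw [AddMonoidAlgebra.smul_single', mul_one]
    rw [this]
    refine Submodule.sum_mem _ fun a ha => Submodule.smul_mem _ _ ?_
    exact Submodule.subset_span ⟨a, hf a ha, rfl⟩
  constructor
  · -- (a)
    ext f
    simp only [Set.mem_setOf_eq, SetLike.mem_coe]
    constructor
    · intro hf
      apply memKS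
      intro a ha
      by_contra hna
      obtain ⟨χ, hχ1, hχ2⟩ := sep a hna
      have h1 : (lactM χ f).coeff a = f.coeff a := by rw [hf χ hχ1]
      rw [lactM_coeff] at h1
      have hfa : f.coeff a ≠ 0 := Finsupp.mem_support_iff.mp ha
      have h2 : (χ (Multiplicative.ofAdd a) : k) = 1 := by
        have := mul_right_cancel₀ hfa (h1.trans (one_mul (f.coeff a)).symm)
        exact this
      exact hχ2 (Units.ext (by rw [h2, Units.val_one]))
    · intro hf χ hχ
      have hle : KS ≤ LinearMap.eqLocus (lactM χ).toLinearMap LinearMap.id := by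
        rw [hKS]
        apply Submodule.span_le.mpr
        rintro g ⟨α, hα, rfl⟩
        show lactM χ (AddMonoidAlgebra.single α 1) = AddMonoidAlgebra.single α 1
        rw [lactM_single, hχ α hα, Units.val_one, one_mul]
      exact hle hf
  · -- (b)
    intro I hI
    have stab : ∀ χ : Multiplicative (Fin n → ℤ) →* kˣ,
        (∀ α, (∀ β, σ α β = 1) → χ (Multiplicative.ofAdd α) = 1) →
        ∀ f ∈ I, lactM χ f ∈ I := by
      intro χ hχ f hf
      have : f ∈ Ideal.comap (lactM χ) I := by rw [hI χ hχ]; exact hf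
      exact Ideal.mem_comap.mp this
    set J := Ideal.span ((I : Set (AddMonoidAlgebra k (Fin n → ℤ))) ∩ (KS : Set _)) with hJ
    have hsm : ∀ (c : k) (y : AddMonoidAlgebra k (Fin n → ℤ)), y ∈ J → c • y ∈ J := by
      intro c y hy
      rw [Algebra.smul_def]
      exact Ideal.mul_mem_left _ _ hy
    have main : ∀ m : ℕ, ∀ f : AddMonoidAlgebra k (Fin n → ℤ),
        f ∈ I → f.coeff.support.card ≤ m → f ∈ J := by
      intro m
      induction m with
      | zero =>
          intro f _ hc
          have : f = 0 := AddMonoidAlgebra.coeff_eq_zero.mp (Finsupp.card_support_eq_zero.mp (Nat.le_zero.mp hc))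
          rw [this]; exact zero_mem J
      | succ m ih =>
          intro f hf hc
          by_cases hcoset : ∀ a ∈ f.coeff.support, ∀ b ∈ f.coeff.support, ∀ β, σ (a - b) β = 1
          · rcases eq_or_ne f 0 with rfl | hf0
            · exact zero_mem J
            · obtain ⟨γ, hγ⟩ := Finsupp.support_nonempty_iff.mpr (mt AddMonoidAlgebra.coeff_eq_zero.mp hf0)
              set g := f * AddMonoidAlgebra.single (-γ) (1:k) with hg
              have hgI : g ∈ I := Ideal.mul_mem_right _ I hf
              have hgKS : g ∈ KS := by
                apply memKS
                intro a ha β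
                have hcoeff : g.coeff a = f.coeff (a + γ) := by
                  rw [hg, AddMonoidAlgebra.coeff_mul_single_apply, mul_one, neg_neg]
                have hmem : a + γ ∈ f.coeff.support := by
                  rw [Finsupp.mem_support_iff] at ha ⊢
                  rw [hcoeff] at ha; exact ha
                have h3 := hcoset (a + γ) hmem γ hγ β
                rwa [add_sub_cancel_right] at h3
              have hgJ : g ∈ J := Ideal.subset_span ⟨hgI, hgKS⟩
              have hfg : f = g * AddMonoidAlgebra.single γ 1 := by
                rw [hg, mul_assoc, AddMonoidAlgebra.single_mul_single, neg_add_cancel,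
                  mul_one, ← AddMonoidAlgebra.one_def, mul_one]
              rw [hfg]
              exact Ideal.mul_mem_right _ J hgJ
          · push_neg at hcoset
            obtain ⟨a₀, ha₀, a₁, ha₁, β, hβ⟩ := hcoset
            obtain ⟨χ, hχ1, hχ2⟩ := sep (a₀ - a₁) (fun h => hβ (h β))
            set u : kˣ := χ (Multiplicative.ofAdd a₀) with hu
            set v : kˣ := χ (Multiplicative.ofAdd a₁) with hv
            have huv : (u : k) ≠ (v : k) := by
              intro h
              apply hχ2
              have huv' : u = v := Units.ext h
              have hsplit : Multiplicative.ofAdd (a₀ - a₁)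
                  = Multiplicative.ofAdd a₀ * (Multiplicative.ofAdd a₁)⁻¹ := rfl
              rw [hsplit, map_mul, map_inv, ← hu, ← hv, huv', mul_inv_cancel]
            have hgI' : ∀ c : kˣ, lactM χ f - (c:k) • f ∈ I := by
              intro c
              refine Submodule.sub_mem _ (stab χ hχ1 f hf) ?_
              rw [Algebra.smul_def]
              exact Ideal.mul_mem_left _ _ hf
            have hcoeff : ∀ (c : kˣ) (a : Fin n → ℤ),
                (lactM χ f - (c:k) • f).coeff a = ((χ (Multiplicative.ofAdd a) : k) - c) * f.coeff a := by
              intro c a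
              rw [AddMonoidAlgebra.coeff_sub, Finsupp.sub_apply, lactM_coeff, AddMonoidAlgebra.coeff_smul, Finsupp.smul_apply, smul_eq_mul, sub_mul]
            have hcard : ∀ (c : kˣ) (a : Fin n → ℤ), a ∈ f.coeff.support →
                χ (Multiplicative.ofAdd a) = c →
                (lactM χ f - (c:k) • f).coeff.support.card ≤ m := by
              intro c a ha hca
              have hsub : (lactM χ f - (c:k) • f).coeff.support ⊆ f.coeff.support.erase a := by
                intro x hx
                rw [Finsupp.mem_support_iff, hcoeff] at hx
                rw [Finset.mem_erase]
                constructor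
                · intro hxa
                  apply hx
                  rw [hxa, hca, sub_self, zero_mul]
                · rw [Finsupp.mem_support_iff]
                  intro h0
                  exact hx (by rw [h0, mul_zero])
              have h1 := Finset.card_le_card hsub
              have h2 := Finset.card_erase_of_mem ha
              have h3 : 1 ≤ f.coeff.support.card := Finset.card_pos.mpr ⟨a, ha⟩
              omega
            have hgJ : lactM χ f - (v:k) • f ∈ J := ih _ (hgI' v) (hcard v a₁ ha₁ rfl)
            have hhJ : lactM χ f - (u:k) • f ∈ J := ih _ (hgI' u) (hcard u a₀ ha₀ rfl)
            have hdiff : ((u:k) - (v:k)) • f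
                = (lactM χ f - (v:k) • f) - (lactM χ f - (u:k) • f) := by
              rw [sub_smul]; abel
            have hmemJ : ((u:k) - (v:k)) • f ∈ J := by
              rw [hdiff]; exact Submodule.sub_mem _ hgJ hhJ
            have hne : (u:k) - (v:k) ≠ 0 := sub_ne_zero.mpr huv
            have hfeq : f = ((u:k) - (v:k))⁻¹ • (((u:k) - (v:k)) • f) := by
              rw [smul_smul, inv_mul_cancel₀ hne, one_smul]
            rw [hfeq]
            exact hsm _ _ hmemJ
    refine le_antisymm (fun f hf => main f.coeff.support.card f hf le_rfl) ?_
    rw [hJ]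
    exact Ideal.span_le.mpr Set.inter_subset_left
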